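/- (Lukács, even case) Let a < b be real numbers and let q ∈ ℝ[y] be a univariate polynomial of even degree d that is nonnegative on the interval [a,b]. Then there exist polynomials σ₀, σ₁ ∈ ℝ[y], each a sum of squares of polynomials, with deg σ₀ ≤ d and deg σ₁ ≤ d − 2, such that q(y) = σ₀(y) + σ₁(y)·(b − y)·(y − a) for all y ∈ ℝ. -/

import Mathlib

open Polynomial Set Filter

lemma sos_C {c : ℝ} (hc : 0 ≤ c) : IsSumSq (C c : ℝ[X]) := by
  have h : (C c : ℝ[X]) = C (Real.sqrt c) * C (Real.sqrt c) + 0 := by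
    rw [← C_mul, Real.mul_self_sqrt hc, add_zero]
  rw [h]; exact IsSumSq.sq_add _ IsSumSq.zero

lemma sos_sq_mul (p : ℝ[X]) {s : ℝ[X]} (hs : IsSumSq s) : IsSumSq (p * p * s) := by
  induction hs with
  | zero => rw [mul_zero]; exact IsSumSq.zero
  | @sq_add a S pS ih =>
      have h : p * p * (a * a + S) = (p * a) * (p * a) + p * p * S := by ring
      rw [h]; exact IsSumSq.sq_add _ ih

lemma double_root_dvd {p : ℝ[X]} {t : ℝ} (h0 : p.eval t = 0)
    (h1 : p.derivative.eval t = 0) : ∃ h : ℝ[X], p = (X - C t) * (X - C t) * h := by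
  obtain ⟨g, hg⟩ := (dvd_iff_isRoot.mpr h0)
  have hd : p.derivative = g + (X - C t) * g.derivative := by
    rw [hg, derivative_mul]; simp
  have hgt : g.eval t = 0 := by
    have h2 := h1
    rw [hd] at h2; simpa using h2
  obtain ⟨h, hh⟩ := (dvd_iff_isRoot.mpr hgt)
  exact ⟨h, by rw [hg, hh]; ring⟩

lemma nonneg_at_of_nonneg_near {h : ℝ[X]} {a b t : ℝ} (hab : a < b)
    (ht : t ∈ Set.Icc a b) (H : ∀ y ∈ Set.Icc a b, y ≠ t → 0 ≤ h.eval y) :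
    0 ≤ h.eval t := by
  have hc : Tendsto (fun y => h.eval y) (nhdsWithin t (Set.Ioi t)) (nhds (h.eval t)) :=
    (h.continuousAt).continuousWithinAt.tendsto
  have hc' : Tendsto (fun y => h.eval y) (nhdsWithin t (Set.Iio t)) (nhds (h.eval t)) :=
    (h.continuousAt).continuousWithinAt.tendsto
  rcases lt_or_eq_of_le ht.2 with htb | htb
  · refine ge_of_tendsto hc ?_
    filter_upwards [Ioc_mem_nhdsGT_of_mem ⟨le_refl t, htb⟩] with y hy
    exact H y ⟨le_trans ht.1 hy.1.le, hy.2⟩ (ne_of_gt hy.1)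
  · have hta : a < t := htb ▸ hab
    refine ge_of_tendsto hc' ?_
    filter_upwards [Ico_mem_nhdsLT_of_mem ⟨hta, le_refl t⟩] with y hy
    exact H y ⟨hy.1, le_trans hy.2.le ht.2⟩ (ne_of_lt hy.2)

lemma deg_shift (m r : ℝ) (s : ℝ[X]) :
    (C m + (X - C r) * (X - C r) * s).natDegree ≤ 2 + s.natDegree := by
  refine le_trans (natDegree_add_le _ _) ?_
  have h1 : ((X - C r) * (X - C r) * s).natDegree ≤ 2 + s.natDegree := by
    refine le_trans (natDegree_mul_le) ?_
    have h2 : ((X - C r) * (X - C r)).natDegree ≤ 2 := by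
      refine le_trans (natDegree_mul_le) ?_
      simp [natDegree_X_sub_C]
    omega
  simp only [natDegree_C]
  omega

theorem lukacs_main (n : ℕ) : ∀ a b : ℝ, a < b → ∀ q : ℝ[X], q.natDegree = n →
    (∀ y ∈ Set.Icc a b, 0 ≤ q.eval y) →
    ((Even n → ∃ σ₀ σ₁ : ℝ[X], IsSumSq σ₀ ∧ IsSumSq σ₁ ∧ σ₀.natDegree ≤ n ∧
        (σ₁ = 0 ∨ σ₁.natDegree + 2 ≤ n) ∧
        ∀ y : ℝ, q.eval y = σ₀.eval y + σ₁.eval y * (b - y) * (y - a)) ∧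
    (Odd n → ∃ σ₀ σ₁ : ℝ[X], IsSumSq σ₀ ∧ IsSumSq σ₁ ∧ σ₀.natDegree + 1 ≤ n ∧
        σ₁.natDegree + 1 ≤ n ∧
        ∀ y : ℝ, q.eval y = (y - a) * σ₀.eval y + (b - y) * σ₁.eval y)) := by
  induction n using Nat.strong_induction_on with
  | _ n IH =>
  intro a b hab q hdeg hnn
  by_cases hn0 : n = 0
  · subst hn0
    constructor
    · intro _
      obtain ⟨c, hc⟩ : ∃ c, q = C c := ⟨q.coeff 0, q.eq_C_of_natDegree_eq_zero hdeg⟩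
      have hc0 : 0 ≤ c := by
        have := hnn a ⟨le_refl a, hab.le⟩
        rwa [hc, eval_C] at this
      exact ⟨q, 0, by rw [hc]; exact sos_C hc0, IsSumSq.zero,
        hdeg.le, Or.inl rfl, fun y => by simp⟩
    · intro hodd; exact absurd hodd (by simp)
  -- n ≥ 1 : find minimum point
  have hn1 : 1 ≤ n := Nat.one_le_iff_ne_zero.mpr hn0
  obtain ⟨t, hmem, hminOn⟩ := isCompact_Icc.exists_isMinOn (Set.nonempty_Icc.mpr hab.le)
    (q.continuous_aeval.continuousOn)
  have hmin : ∀ y ∈ Set.Icc a b, q.eval t ≤ q.eval y := fun y hy => hminOn hy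
  set m : ℝ := q.eval t with hm
  have hm0 : 0 ≤ m := hnn t hmem
  set p : ℝ[X] := q - C m with hp
  have hpdeg : p.natDegree = n := by rw [hp, natDegree_sub_C, hdeg]
  have hp0 : p ≠ 0 := fun h => hn0 (by rw [← hpdeg, h, natDegree_zero])
  have hpev : ∀ y : ℝ, p.eval y = q.eval y - m := fun y => by rw [hp]; simp
  have hpnn : ∀ y ∈ Set.Icc a b, 0 ≤ p.eval y := fun y hy => by
    rw [hpev]; linarith [hmin y hy]
  have hpt : p.eval t = 0 := by rw [hpev]; simp [hm]
  set c : ℝ := m / (b - a) with hcdef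
  have hc0 : 0 ≤ c := div_nonneg hm0 (by linarith)
  have hcm : c * (b - a) = m := div_mul_cancel₀ m (by linarith)
  rcases eq_or_lt_of_le hmem.1 with hta | hta
  · -- t = a
    obtain ⟨g, hg⟩ := dvd_iff_isRoot.mpr (hta ▸ hpt : p.eval a = 0)
    have hg0 : g ≠ 0 := fun h => hp0 (by rw [hg, h, mul_zero])
    have hgdeg : g.natDegree = n - 1 := by
      have := hpdeg
      rw [hg, natDegree_mul (X_sub_C_ne_zero a) hg0, natDegree_X_sub_C] at this
      omega
    have hqev : ∀ y : ℝ, q.eval y = (y - a) * g.eval y + m := by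
      intro y
      have h2 := congrArg (eval y) hg
      rw [hpev] at h2
      simp only [eval_mul, eval_sub, eval_X, eval_C] at h2
      linarith
    have hgne : ∀ y ∈ Set.Icc a b, y ≠ a → 0 ≤ g.eval y := by
      intro y hy hyne
      have hya : 0 < y - a := by
        rcases lt_or_eq_of_le hy.1 with h | h
        · linarith
        · exact absurd h.symm hyne
      have h3 := hpnn y hy
      rw [hpev, hqev y] at h3
      nlinarith
    have hgnn : ∀ y ∈ Set.Icc a b, 0 ≤ g.eval y := by
      intro y hy
      rcases eq_or_ne y a with rfl | hyne
      · exact nonneg_at_of_nonneg_near hab hy (fun z hz hzne => hgne z hz hzne)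
      · exact hgne y hy hyne
    constructor
    · -- Even n, min at a : use odd case for g
      intro heven
      have hodd : Odd (n - 1) := by
        obtain ⟨k, hk⟩ := heven; exact ⟨k - 1, by omega⟩
      obtain ⟨s0, s1, hs0, hs1, hd0, hd1, heq⟩ :=
        (IH (n - 1) (by omega) a b hab g hgdeg hgnn).2 hodd
      refine ⟨C m + (X - C a) * (X - C a) * s0, s1,
        (sos_C hm0).add (sos_sq_mul _ hs0), hs1, ?_, ?_, ?_⟩
      · refine le_trans (deg_shift m a s0) ?_; omega
      · right; omega
      · intro y
        have h4 := heq y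
        simp only [eval_add, eval_mul, eval_sub, eval_X, eval_C]
        rw [hqev y, h4]; ring
    · -- Odd n, min at a : use even case for g
      intro hodd
      have heven : Even (n - 1) := by
        obtain ⟨k, hk⟩ := hodd; exact ⟨k, by omega⟩
      obtain ⟨s0, s1, hs0, hs1, hd0, hd1, heq⟩ :=
        (IH (n - 1) (by omega) a b hab g hgdeg hgnn).1 heven
      refine ⟨C c + s0, C c + (X - C a) * (X - C a) * s1,
        (sos_C hc0).add hs0, (sos_C hc0).add (sos_sq_mul _ hs1), ?_, ?_, ?_⟩
      · have := natDegree_add_le (C c) s0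
        simp only [natDegree_C] at this
        omega
      · rcases hd1 with rfl | hd1
        · simp only [mul_zero, add_zero, natDegree_C]; omega
        · have := deg_shift c a s1; omega
      · intro y
        have h4 := heq y
        simp only [eval_add, eval_mul, eval_sub, eval_X, eval_C]
        rw [hqev y, h4, ← hcm]; ring
  rcases eq_or_lt_of_le hmem.2 with htb | htb
  · -- t = b
    subst htb
    obtain ⟨g', hg'⟩ := dvd_iff_isRoot.mpr hpt
    set g : ℝ[X] := -g' with hgdef
    have hg'0 : g' ≠ 0 := fun h => hp0 (by rw [hg', h, mul_zero])
    have hg0 : g ≠ 0 := by simpa [hgdef] using hg'0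
    have hgdeg : g.natDegree = n - 1 := by
      have h5 := hpdeg
      rw [hg', natDegree_mul (X_sub_C_ne_zero t) hg'0, natDegree_X_sub_C] at h5
      rw [hgdef, natDegree_neg]; omega
    have hqev : ∀ y : ℝ, q.eval y = (t - y) * g.eval y + m := by
      intro y
      have h2 := congrArg (eval y) hg'
      rw [hpev] at h2
      simp only [eval_mul, eval_sub, eval_X, eval_C] at h2
      simp only [hgdef, eval_neg]
      linarith
    have hgne : ∀ y ∈ Set.Icc a t, y ≠ t → 0 ≤ g.eval y := by
      intro y hy hyne
      have hyb : 0 < t - y := by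
        rcases lt_or_eq_of_le hy.2 with h | h
        · linarith
        · exact absurd h hyne
      have h3 := hpnn y hy
      rw [hpev, hqev y] at h3
      nlinarith
    have hgnn : ∀ y ∈ Set.Icc a t, 0 ≤ g.eval y := by
      intro y hy
      rcases eq_or_ne y t with rfl | hyne
      · exact nonneg_at_of_nonneg_near hab hy (fun z hz hzne => hgne z hz hzne)
      · exact hgne y hy hyne
    constructor
    · intro heven
      have hodd : Odd (n - 1) := by
        obtain ⟨k, hk⟩ := heven; exact ⟨k - 1, by omega⟩
      obtain ⟨s0, s1, hs0, hs1, hd0, hd1, heq⟩ :=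
        (IH (n - 1) (by omega) a t hab g hgdeg hgnn).2 hodd
      refine ⟨C m + (X - C t) * (X - C t) * s1, s0,
        (sos_C hm0).add (sos_sq_mul _ hs1), hs0, ?_, ?_, ?_⟩
      · refine le_trans (deg_shift m t s1) ?_; omega
      · right; omega
      · intro y
        have h4 := heq y
        simp only [eval_add, eval_mul, eval_sub, eval_X, eval_C]
        rw [hqev y, h4]; ring
    · intro hodd
      have heven : Even (n - 1) := by
        obtain ⟨k, hk⟩ := hodd; exact ⟨k, by omega⟩
      obtain ⟨s0, s1, hs0, hs1, hd0, hd1, heq⟩ :=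
        (IH (n - 1) (by omega) a t hab g hgdeg hgnn).1 heven
      refine ⟨C c + (X - C t) * (X - C t) * s1, C c + s0,
        (sos_C hc0).add (sos_sq_mul _ hs1), (sos_C hc0).add hs0, ?_, ?_, ?_⟩
      · rcases hd1 with rfl | hd1
        · simp only [mul_zero, add_zero, natDegree_C]; omega
        · have := deg_shift c t s1; omega
      · have := natDegree_add_le (C c) s0
        simp only [natDegree_C] at this
        omega
      · intro y
        have h4 := heq y
        simp only [eval_add, eval_mul, eval_sub, eval_X, eval_C]
        rw [hqev y, h4, ← hcm]; ring
  · -- interior minimum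
    have hderiv : q.derivative.eval t = 0 := by
      have hloc : IsLocalMin (fun y => q.eval y) t :=
        Filter.eventually_of_mem (Icc_mem_nhds hta htb) (fun y hy => hmin y hy)
      have := hloc.deriv_eq_zero
      rwa [Polynomial.deriv] at this
    have hpderiv : p.derivative.eval t = 0 := by
      rw [hp]; simp [hderiv]
    obtain ⟨h, hh⟩ := double_root_dvd hpt hpderiv
    have hh0 : h ≠ 0 := fun hz => hp0 (by rw [hh, hz, mul_zero])
    have hhdeg : h.natDegree = n - 2 ∧ 2 ≤ n := by
      have h5 := hpdeg
      rw [hh, natDegree_mul (mul_ne_zero (X_sub_C_ne_zero t) (X_sub_C_ne_zero t)) hh0,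
        natDegree_mul (X_sub_C_ne_zero t) (X_sub_C_ne_zero t), natDegree_X_sub_C] at h5
      omega
    have hn2 : 2 ≤ n := hhdeg.2
    have hqev : ∀ y : ℝ, q.eval y = (y - t) * (y - t) * h.eval y + m := by
      intro y
      have h2 := congrArg (eval y) hh
      rw [hpev] at h2
      simp only [eval_mul, eval_sub, eval_X, eval_C] at h2
      linarith
    have hhne : ∀ y ∈ Set.Icc a b, y ≠ t → 0 ≤ h.eval y := by
      intro y hy hyne
      have hyt : 0 < (y - t) * (y - t) := by
        exact mul_self_pos.mpr (sub_ne_zero.mpr hyne)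
      have h3 := hpnn y hy
      rw [hpev, hqev y] at h3
      nlinarith
    have hhnn : ∀ y ∈ Set.Icc a b, 0 ≤ h.eval y := by
      intro y hy
      rcases eq_or_ne y t with rfl | hyne
      · exact nonneg_at_of_nonneg_near hab hy (fun z hz hzne => hhne z hz hzne)
      · exact hhne y hy hyne
    constructor
    · intro heven
      have heven' : Even (n - 2) := by
        obtain ⟨k, hk⟩ := heven; exact ⟨k - 1, by omega⟩
      obtain ⟨s0, s1, hs0, hs1, hd0, hd1, heq⟩ :=
        (IH (n - 2) (by omega) a b hab h hhdeg.1 hhnn).1 heven'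
      refine ⟨C m + (X - C t) * (X - C t) * s0, (X - C t) * (X - C t) * s1,
        (sos_C hm0).add (sos_sq_mul _ hs0), sos_sq_mul _ hs1, ?_, ?_, ?_⟩
      · refine le_trans (deg_shift m t s0) ?_; omega
      · rcases hd1 with rfl | hd1
        · exact Or.inl (mul_zero _)
        · right
          have h6 : ((X - C t) * (X - C t) * s1).natDegree ≤ 2 + s1.natDegree := by
            refine le_trans (natDegree_mul_le) ?_
            have h7 : ((X - C t) * (X - C t)).natDegree ≤ 2 := by
              refine le_trans (natDegree_mul_le) ?_
              simp [natDegree_X_sub_C]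
            omega
          omega
      · intro y
        have h4 := heq y
        simp only [eval_add, eval_mul, eval_sub, eval_X, eval_C]
        rw [hqev y, h4]; ring
    · intro hodd
      have hn3 : 3 ≤ n := by
        obtain ⟨k, hk⟩ := hodd; omega
      have hodd' : Odd (n - 2) := by
        obtain ⟨k, hk⟩ := hodd; exact ⟨k - 1, by omega⟩
      obtain ⟨s0, s1, hs0, hs1, hd0, hd1, heq⟩ :=
        (IH (n - 2) (by omega) a b hab h hhdeg.1 hhnn).2 hodd'
      refine ⟨C c + (X - C t) * (X - C t) * s0, C c + (X - C t) * (X - C t) * s1,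
        (sos_C hc0).add (sos_sq_mul _ hs0), (sos_C hc0).add (sos_sq_mul _ hs1), ?_, ?_, ?_⟩
      · have := deg_shift c t s0; omega
      · have := deg_shift c t s1; omega
      · intro y
        have h4 := heq y
        simp only [eval_add, eval_mul, eval_sub, eval_X, eval_C]
        rw [hqev y, h4, ← hcm]; ring


/-- Lukács, even case: if `q ∈ ℝ[y]` has even degree `d` and is
nonnegative on `[a,b]` (`a < b`), then `q = σ₀ + σ₁·(b − y)(y − a)` with `σ₀, σ₁`
sums of squares, `deg σ₀ ≤ d`, `deg σ₁ ≤ d − 2`. -/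
theorem lukacs_even (a b : ℝ) (hab : a < b) (d : ℕ) (hd : Even d)
    (q : Polynomial ℝ) (hdeg : q.natDegree = d)
    (hnonneg : ∀ y ∈ Set.Icc a b, 0 ≤ q.eval y) :
    ∃ σ₀ σ₁ : Polynomial ℝ, IsSumSq σ₀ ∧ IsSumSq σ₁ ∧
      σ₀.natDegree ≤ d ∧ σ₁.natDegree ≤ d - 2 ∧
      ∀ y : ℝ, q.eval y = σ₀.eval y + σ₁.eval y * (b - y) * (y - a) := by
  obtain ⟨σ₀, σ₁, hs0, hs1, hd0, hd1, heq⟩ :=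
    (lukacs_main d a b hab q hdeg hnonneg).1 hd
  refine ⟨σ₀, σ₁, hs0, hs1, hd0, ?_, heq⟩
  rcases hd1 with rfl | hd1
  · simp
  · omega
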